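/- Let A = (Q, δ, I, F) be an NFA over a finite alphabet Σ, let μ : Σ* → [0,∞) be summable with D(L) = ∑_{w∈L} μ(w), and let V ⊆ Q. Then the probabilistic distance between A and its pruning is bounded by the sum of the state labels ℓ³_p: D(L(A) △ L(A|_{Q∖V})) ≤ ∑_{q∈V} D(B_A(q)·L_A(q)). -/

import Mathlib

/-- `langWeight μ L` is `D(L) = ∑_{w ∈ L} μ(w)`. -/
noncomputable def langWeight {α : Type*} (μ : List α → ℝ) (L : Set (List α)) : ℝ :=
  ∑' w : L, μ (w : List α)

/-- The language of an NFA, as a set of words. -/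
def lang {α σ : Type*} (A : NFA α σ) : Set (List α) :=
  {w | ∃ qf ∈ A.accept, qf ∈ A.eval w}

/-- The banguage of a state `q`: words over which some run from an initial
state of `A` ends in `q`. -/
def bang {α σ : Type*} (A : NFA α σ) (q : σ) : Set (List α) :=
  {w | q ∈ A.eval w}

/-- The language of a state `q`: words over which some run from `q` ends in an
accepting state of `A`. -/
def langOf {α σ : Type*} (A : NFA α σ) (q : σ) : Set (List α) :=
  {w | ∃ qf ∈ A.accept, qf ∈ A.evalFrom {q} w}

/-- Concatenation of two languages. -/
def concatLang {α : Type*} (K L : Set (List α)) : Set (List α) :=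
  {w | ∃ u ∈ K, ∃ v ∈ L, w = u ++ v}

/-- The restriction `A|_S` of an NFA `A` to the set of states `S`. -/
def restrict {α σ : Type*} (A : NFA α σ) (S : Set σ) : NFA α S where
  step q a := {q' | (q' : σ) ∈ A.step q a}
  start := {q | (q : σ) ∈ A.start}
  accept := {q | (q : σ) ∈ A.accept}

/- ### Auxiliary lemmas about weights -/

lemma langWeight_eq {α : Type*} (μ : List α → ℝ) (L : Set (List α)) :
    langWeight μ L = ∑' w, L.indicator μ w := tsum_subtype L μ

lemma langWeight_mono {α : Type*} (μ : List α → ℝ) (hμ0 : ∀ w, 0 ≤ μ w)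
    (hμ : Summable μ) {L M : Set (List α)} (h : L ⊆ M) :
    langWeight μ L ≤ langWeight μ M := by
  rw [langWeight_eq, langWeight_eq]
  exact Summable.tsum_le_tsum (fun w => Set.indicator_le_indicator_of_subset h hμ0 w)
    (hμ.indicator L) (hμ.indicator M)

lemma langWeight_union_le {α : Type*} (μ : List α → ℝ) (hμ0 : ∀ w, 0 ≤ μ w)
    (hμ : Summable μ) (L M : Set (List α)) :
    langWeight μ (L ∪ M) ≤ langWeight μ L + langWeight μ M := by
  rw [langWeight_eq, langWeight_eq, langWeight_eq, ← Summable.tsum_add (hμ.indicator L) (hμ.indicator M)]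
  refine Summable.tsum_le_tsum (fun w => ?_) (hμ.indicator _) ((hμ.indicator L).add (hμ.indicator M))
  by_cases hL : w ∈ L
  · simp only [Set.indicator_of_mem (Set.mem_union_left M hL), Set.indicator_of_mem hL]
    exact le_add_of_nonneg_right (Set.indicator_nonneg (fun x _ => hμ0 x) w)
  · by_cases hM : w ∈ M
    · simp only [Set.indicator_of_mem (Set.mem_union_right L hM), Set.indicator_of_mem hM,
        Set.indicator_of_notMem hL]
      simp
    · simp [Set.indicator_of_notMem, hL, hM]

lemma langWeight_biUnion_le {α ι : Type*} (μ : List α → ℝ) (hμ0 : ∀ w, 0 ≤ μ w)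
    (hμ : Summable μ) (s : Finset ι) (f : ι → Set (List α)) :
    langWeight μ (⋃ i ∈ s, f i) ≤ ∑ i ∈ s, langWeight μ (f i) := by
  classical
  induction s using Finset.induction with
  | empty => simp [langWeight, tsum_empty]
  | @insert a s hnot ih =>
    rw [Finset.sum_insert hnot]
    calc langWeight μ (⋃ i ∈ insert a s, f i)
        ≤ langWeight μ (f a ∪ ⋃ i ∈ s, f i) := by
          apply langWeight_mono μ hμ0 hμ
          simp [Set.biUnion_insert]
      _ ≤ langWeight μ (f a) + langWeight μ (⋃ i ∈ s, f i) :=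
          langWeight_union_le μ hμ0 hμ _ _
      _ ≤ _ := by linarith [ih]

/- ### Auxiliary lemmas about NFAs -/

lemma restrict_eval_subset {α σ : Type*} (A : NFA α σ) (S : Set σ)
    (w : List α) (q : S) (h : q ∈ (restrict A S).eval w) : (q : σ) ∈ A.eval w := by
  induction w using List.reverseRecOn generalizing q with
  | nil => exact h
  | append_singleton v a ih =>
    rw [NFA.eval_append_singleton, NFA.mem_stepSet] at h ⊢
    obtain ⟨p, hp, hstep⟩ := h
    exact ⟨p, ih p hp, hstep⟩

lemma eval_restrict_of_no_cut {α σ : Type*} (A : NFA α σ) (V : Finset σ) (w : List α) (p : σ)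
    (hp : p ∈ A.eval w)
    (hno : ∀ q ∈ V, ∀ u v, w = u ++ v → q ∈ A.eval u → p ∉ A.evalFrom {q} v) :
    ∃ hpV : p ∈ ((V : Set σ)ᶜ : Set σ),
      (⟨p, hpV⟩ : ((V : Set σ)ᶜ : Set σ)) ∈ (restrict A (↑V : Set σ)ᶜ).eval w := by
  induction w using List.reverseRecOn generalizing p with
  | nil =>
    have hpV : p ∈ ((V : Set σ)ᶜ : Set σ) := by
      intro hmem
      exact hno p hmem [] [] rfl hp (by simp [NFA.evalFrom_nil])
    exact ⟨hpV, hp⟩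
  | append_singleton v a ih =>
    rw [NFA.eval_append_singleton, NFA.mem_stepSet] at hp
    obtain ⟨p', hp', hstep⟩ := hp
    have hno' : ∀ q ∈ V, ∀ u v', v = u ++ v' → q ∈ A.eval u → p' ∉ A.evalFrom {q} v' := by
      intro q hq u v' hsplit hu hmem
      refine hno q hq u (v' ++ [a]) (by rw [hsplit, List.append_assoc]) hu ?_
      rw [NFA.evalFrom_append, NFA.evalFrom_singleton, NFA.mem_stepSet]
      exact ⟨p', hmem, hstep⟩
    obtain ⟨hp'V, hres⟩ := ih p' hp' hno'
    have hpV : p ∈ ((V : Set σ)ᶜ : Set σ) := by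
      intro hmem
      refine hno p hmem (v ++ [a]) [] (by simp) ?_ (by simp [NFA.evalFrom_nil])
      rw [NFA.eval_append_singleton, NFA.mem_stepSet]
      exact ⟨p', hp', hstep⟩
    refine ⟨hpV, ?_⟩
    rw [NFA.eval_append_singleton, NFA.mem_stepSet]
    exact ⟨⟨p', hp'V⟩, hres, hstep⟩

/-- The probabilistic distance between an NFA `A` and its pruning by the set of
states `V` is bounded by the sum of the labels `ℓ³_p(q) = D(B_A(q)·L_A(q))`
over `q ∈ V`. -/
theorem pruning_distance_le_sum_labels {α σ : Type*} [Fintype α] [Fintype σ]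
    (A : NFA α σ) (μ : List α → ℝ) (hμ0 : ∀ w, 0 ≤ μ w) (hμ : Summable μ)
    (V : Finset σ) :
    langWeight μ (symmDiff (lang A) (lang (restrict A (↑V : Set σ)ᶜ))) ≤
      ∑ q ∈ V, langWeight μ (concatLang (bang A q) (langOf A q)) := by
  have hsub : symmDiff (lang A) (lang (restrict A (↑V : Set σ)ᶜ)) ⊆
      ⋃ q ∈ V, concatLang (bang A q) (langOf A q) := by
    intro w hw
    rw [Set.mem_symmDiff] at hw
    -- the pruned language is contained in the original one
    have hMsubL : lang (restrict A (↑V : Set σ)ᶜ) ⊆ lang A := by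
      intro x hx
      obtain ⟨qf, hqf, hev⟩ := hx
      exact ⟨(qf : σ), hqf, restrict_eval_subset A _ x qf hev⟩
    rcases hw with ⟨hwL, hwM⟩ | ⟨hwM, hwL⟩
    · -- main case: `w` accepted by `A` but not by the pruning
      obtain ⟨qf, hqf, hev⟩ := hwL
      by_contra hnotU
      simp only [Set.mem_iUnion, not_exists] at hnotU
      have hno : ∀ q ∈ V, ∀ u v, w = u ++ v → q ∈ A.eval u → qf ∉ A.evalFrom {q} v := by
        intro q hq u v hsplit hu hmem
        exact hnotU q hq ⟨u, hu, v, ⟨qf, hqf, hmem⟩, hsplit⟩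
      obtain ⟨hpV, hres⟩ := eval_restrict_of_no_cut A V w qf hev hno
      exact hwM ⟨⟨qf, hpV⟩, hqf, hres⟩
    · exact absurd (hMsubL hwM) hwL
  calc langWeight μ (symmDiff (lang A) (lang (restrict A (↑V : Set σ)ᶜ)))
      ≤ langWeight μ (⋃ q ∈ V, concatLang (bang A q) (langOf A q)) :=
        langWeight_mono μ hμ0 hμ hsub
    _ ≤ _ := langWeight_biUnion_le μ hμ0 hμ V _
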